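/- Let κ be an uncountable regular cardinal, P a κ-cc forcing poset, and Q a κ-closed forcing poset. For any condition (p,q) ∈ P × Q and any P×Q-name τ for an ordinal, there exist r ≤ q in Q and a P-name σ for an ordinal such that (p,r) forces τ = σ. -/

import Mathlib

open scoped Classical in
noncomputable def gAux {P Q : Type} [Preorder P] [Preorder Q]
    (p : P) (q : Q) (D : P × Q → Ordinal.{0} → Prop) : Ordinal.{0} → P × Q :=
  Ordinal.lt_wf.fix fun ξ g =>
    if h : ∃ pq : P × Q, pq.1 ≤ p ∧ pq.2 ≤ q ∧
        (∀ η : Ordinal, ∀ hη : η < ξ, ¬ ∃ s, s ≤ pq.1 ∧ s ≤ (g η hη).1) ∧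
        (∀ η : Ordinal, ∀ hη : η < ξ, pq.2 ≤ (g η hη).2) ∧ (∃ α, D pq α)
    then h.choose else (p, q)

def Good {P Q : Type} [Preorder P] [Preorder Q]
    (p : P) (q : Q) (D : P × Q → Ordinal.{0} → Prop) (ξ : Ordinal.{0}) (pq : P × Q) : Prop :=
  pq.1 ≤ p ∧ pq.2 ≤ q ∧
    (∀ η : Ordinal, ∀ _ : η < ξ, ¬ ∃ s, s ≤ pq.1 ∧ s ≤ (gAux p q D η).1) ∧
    (∀ η : Ordinal, ∀ _ : η < ξ, pq.2 ≤ (gAux p q D η).2) ∧ (∃ α, D pq α)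

lemma gAux_spec {P Q : Type} [Preorder P] [Preorder Q]
    (p : P) (q : Q) (D : P × Q → Ordinal.{0} → Prop) (ξ : Ordinal.{0})
    (h : ∃ pq, Good p q D ξ pq) : Good p q D ξ (gAux p q D ξ) := by
  classical
  have e : gAux p q D ξ =
      if h : ∃ pq, Good p q D ξ pq then h.choose else (p, q) := by
    conv_lhs => rw [gAux]
    rw [Ordinal.lt_wf.fix_eq]
    rfl
  rw [e, dif_pos h]
  exact h.choose_spec

theorem exhaustion
    (κ : Cardinal.{0}) (hκ : Cardinal.aleph0 < κ) (hreg : κ.IsRegular)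
    (P : Type) [Preorder P] (Q : Type) [Preorder Q]
    (hcc : ∀ A : Set P, (∀ a ∈ A, ∀ b ∈ A, a ≠ b → ¬ ∃ c, c ≤ a ∧ c ≤ b) →
      Cardinal.mk A < κ)
    (hclosed : ∀ β : Ordinal.{0}, β.card < κ → ∀ f : ↥(Set.Iio β) → Q,
      (∀ i j : ↥(Set.Iio β), i ≤ j → f j ≤ f i) → ∃ r : Q, ∀ i, r ≤ f i)
    (p : P) (q : Q)
    (D : P × Q → Ordinal.{0} → Prop)
    (hDdown : ∀ r r' : P × Q, r' ≤ r → ∀ α, D r α → D r' α)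
    (hDcoh : ∀ r r' : P × Q, ∀ α α', D r α → D r' α' →
      (∃ s, s ≤ r ∧ s ≤ r') → α = α')
    (hDdense : ∀ r : P × Q, r ≤ (p, q) → ∃ r', r' ≤ r ∧ ∃ α, D r' α) :
    ∃ r : Q, r ≤ q ∧ ∃ σ : P → Ordinal.{0} → Prop,
      (∀ p₁ p₂ : P, p₂ ≤ p₁ → ∀ α, σ p₁ α → σ p₂ α) ∧
      (∀ p₁ p₂ : P, ∀ α α', σ p₁ α → σ p₂ α' → (∃ s, s ≤ p₁ ∧ s ≤ p₂) → α = α') ∧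
      (∀ p₁, p₁ ≤ p → ∃ p₂, p₂ ≤ p₁ ∧ ∃ α, σ p₂ α) ∧
      (∀ p₁, p₁ ≤ p → ∀ α, σ p₁ α → D (p₁, r) α) := by
  classical
  set g := gAux p q D with hgdef
  -- stage 0 is active
  have hactive0 : ∃ pq, Good p q D 0 pq := by
    obtain ⟨r', hr', α, hα⟩ := hDdense (p, q) le_rfl
    exact ⟨r', hr'.1, hr'.2, fun η hη => absurd hη (not_lt_of_ge (zero_le (a := η))),
      fun η hη => absurd hη (not_lt_of_ge (zero_le (a := η))), α, hα⟩
  -- there is a non-active stage below κ.ord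
  have hex : ∃ δ, δ < κ.ord ∧ ¬ ∃ pq, Good p q D δ pq := by
    by_contra hall
    push_neg at hall
    set A : Set P := {x | ∃ ξ : Ordinal, ξ < κ.ord ∧ (g ξ).1 = x} with hA
    have key : ∀ η ξ : Ordinal, η < ξ → ξ < κ.ord →
        ¬ ∃ s, s ≤ (g ξ).1 ∧ s ≤ (g η).1 := by
      intro η ξ hηξ hξκ
      exact (gAux_spec p q D ξ (hall ξ hξκ)).2.2.1 η hηξ
    have hanti : ∀ a ∈ A, ∀ b ∈ A, a ≠ b → ¬ ∃ c, c ≤ a ∧ c ≤ b := by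
      rintro a ⟨ξ, hξ, rfl⟩ b ⟨η, hη, rfl⟩ hab hcompat
      rcases lt_trichotomy ξ η with h | h | h
      · exact key ξ η h hη ⟨hcompat.choose, hcompat.choose_spec.2, hcompat.choose_spec.1⟩
      · exact hab (by rw [h])
      · exact key η ξ h hξ hcompat
    have hAκ := hcc A hanti
    have hinj : Function.Injective
        (fun ξ : ↥(Set.Iio κ.ord) => (⟨(g ξ).1, ξ, ξ.2, rfl⟩ : ↥A)) := by
      intro ξ η hfeq
      have heq : (g ξ).1 = (g η).1 := congrArg Subtype.val hfeq
      by_contra hne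
      have hne' : (ξ : Ordinal) ≠ (η : Ordinal) := fun h => hne (Subtype.ext h)
      rcases hne'.lt_or_gt with h | h
      · exact key ξ η h η.2 ⟨(g η).1, le_rfl, heq ▸ le_rfl⟩
      · exact key η ξ h ξ.2 ⟨(g ξ).1, le_rfl, heq ▸ le_rfl⟩
    have hle : Cardinal.lift.{0} (Cardinal.mk ↥(Set.Iio κ.ord)) ≤
        Cardinal.lift.{1} (Cardinal.mk ↥A) :=
      Cardinal.lift_mk_le'.mpr ⟨⟨_, hinj⟩⟩
    rw [Ordinal.mk_Iio_ordinal, Cardinal.card_ord] at hle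
    simp only [Cardinal.lift_lift, Cardinal.lift_id] at hle
    have : κ ≤ Cardinal.mk ↥A := Cardinal.lift_le.mp hle
    exact absurd hAκ (not_lt.mpr this)
  obtain ⟨δ₀, hδ₀κ, hδ₀⟩ := hex
  set S : Set Ordinal := {δ | ¬ ∃ pq, Good p q D δ pq} with hSdef
  have hS : S.Nonempty := ⟨δ₀, hδ₀⟩
  set δ := Ordinal.lt_wf.min S hS with hδdef
  have hδS : ¬ ∃ pq, Good p q D δ pq := Ordinal.lt_wf.min_mem S hS
  have hδle : δ ≤ δ₀ := not_lt.mp (Ordinal.lt_wf.not_lt_min S hδ₀)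
  have hδκ : δ < κ.ord := lt_of_le_of_lt hδle hδ₀κ
  have hactδ : ∀ η, η < δ → ∃ pq, Good p q D η pq := by
    intro η hη
    by_contra hna
    exact Ordinal.lt_wf.not_lt_min S hna hη
  have hδ0 : (0 : Ordinal) < δ :=
    pos_iff_ne_zero.mpr (fun h => hδS (h ▸ hactive0))
  -- lower bound of the q-sequence
  have hcard : δ.card < κ := Cardinal.lt_ord.mp hδκ
  obtain ⟨r, hr⟩ := hclosed δ hcard (fun i => (g i).2) (by
    intro i j hij
    rcases lt_or_eq_of_le hij with h | h
    · exact (gAux_spec p q D j (hactδ j j.2)).2.2.2.1 i (Subtype.coe_lt_coe.mpr h)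
    · exact le_of_eq (by rw [h]))
  have hrq : r ≤ q := (hr ⟨0, hδ0⟩).trans ((gAux_spec p q D 0 hactive0).2.1)
  -- predensity below p
  have hpre : ∀ p₁, p₁ ≤ p → ∃ η, ∃ _ : η < δ, ∃ s, s ≤ p₁ ∧ s ≤ (g η).1 := by
    intro p₁ hp₁
    by_contra hno
    push_neg at hno
    obtain ⟨pq', hpq', α, hα⟩ := hDdense (p₁, r) ⟨hp₁, hrq⟩
    refine hδS ⟨pq', hpq'.1.trans hp₁, hpq'.2.trans hrq, ?_, ?_, α, hα⟩
    · rintro η hη ⟨s, hs1, hs2⟩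
      exact hno η hη s (hs1.trans hpq'.1) hs2
    · intro η hη
      exact hpq'.2.trans (hr ⟨η, hη⟩)
  refine ⟨r, hrq, fun p' α => D (p', r) α, ?_, ?_, ?_, ?_⟩
  · intro p₁ p₂ h12 α hα
    exact hDdown (p₁, r) (p₂, r) ⟨h12, le_rfl⟩ α hα
  · rintro p₁ p₂ α α' hα hα' ⟨s, hs1, hs2⟩
    exact hDcoh (p₁, r) (p₂, r) α α' hα hα' ⟨(s, r), ⟨hs1, le_rfl⟩, ⟨hs2, le_rfl⟩⟩
  · intro p₁ hp₁
    obtain ⟨η, hη, s, hs1, hs2⟩ := hpre p₁ hp₁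
    obtain ⟨α, hα⟩ := (gAux_spec p q D η (hactδ η hη)).2.2.2.2
    exact ⟨s, hs1, α, hDdown (g η) (s, r) ⟨hs2, hr ⟨η, hη⟩⟩ α hα⟩
  · intro p₁ _ α hα
    exact hα
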